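/- Under the Ewens–Pitman weight system, the conditional expectation of the number of old blocks re-observed, given complete information, satisfies E[R | π] = j − (1/(θ+n)_{m↑})·Σ_{i=1}^{n} m_i·(θ + n − i + σ)_{m↑}. -/

import Mathlib

open Finset

attribute [local instance] Classical.propDecidable

noncomputable section

/-- Rising factorial `x(x+1)⋯(x+N−1)`. -/
def risingFac (x : ℝ) (N : ℕ) : ℝ := ∏ i ∈ Finset.range N, (x + i)

/-- Falling factorial `x(x−1)⋯(x−N+1)`. -/
def fallingFac (x : ℝ) (N : ℕ) : ℝ := ∏ i ∈ Finset.range N, (x - i)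

/-- Noncentral generalized factorial coefficient `C(N,k;σ,γ)`. -/
def gfc (N k : ℕ) (σ γ : ℝ) : ℝ :=
  (1 / (Nat.factorial k : ℝ)) *
    ∑ i ∈ Finset.range (k + 1),
      (-1 : ℝ) ^ i * (Nat.choose k i : ℝ) * risingFac (-(i : ℝ) * σ - γ) N

/-- Central generalized factorial coefficient `C(N,k;σ)`. -/
def cgfc (N k : ℕ) (σ : ℝ) : ℝ := gfc N k σ 0

/-- Binomial coefficient over `ℤ`, zero unless `0 ≤ b ≤ a`. -/
def ibinom (a b : ℤ) : ℝ :=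
  if 0 ≤ b ∧ b ≤ a then (Nat.choose a.toNat b.toNat : ℝ) else 0

/-- Multinomial coefficient `m!/((l!)^r (m−rl)!)`, zero if `rl > m`. -/
def multinom (m l r : ℕ) : ℝ :=
  if r * l ≤ m then
    (Nat.factorial m : ℝ) / ((Nat.factorial l : ℝ) ^ r * (Nat.factorial (m - r * l) : ℝ))
  else 0

/-- `P` is a set partition of the finset `s`. -/
def IsPartOn {α : Type*} (s : Finset α) (P : Finset (Finset α)) : Prop :=
  (∀ B ∈ P, B ⊆ s) ∧ ∅ ∉ P ∧ ∀ a ∈ s, ∃! B, B ∈ P ∧ a ∈ B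

/-- Restriction of a partition to `s`. -/
def restrictPart {α : Type*} [DecidableEq α] (P : Finset (Finset α)) (s : Finset α) :
    Finset (Finset α) := (P.image fun C => C ∩ s).erase ∅

/-- Gibbs probability of a partition with block sizes `|C|` and `VN k` the Gibbs weight. -/
def gibbsW {α : Type*} (σ : ℝ) (VN : ℕ → ℝ) (P : Finset (Finset α)) : ℝ :=
  VN P.card * ∏ C ∈ P, risingFac (1 - σ) (C.card - 1)

/-- Ewens–Pitman weight system. -/
def EPV (σ θ : ℝ) : ℕ → ℕ → ℝ :=
  fun N k => (∏ i ∈ Finset.range k, (θ + (i : ℝ) * σ)) / risingFac θ N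

/-- The "old" elements `{1,…,n}` inside `{1,…,n+m}`. -/
def oldSet (n m : ℕ) : Finset (Fin (n + m)) :=
  Finset.univ.filter fun x => (x : ℕ) < n

/-- Number of new elements in the block of `ρ` containing the old block `Bi`. -/
def Scount (n m : ℕ) (Bi : Finset (Fin (n + m))) (ρ : Finset (Finset (Fin (n + m)))) : ℕ :=
  ∑ C ∈ ρ.filter (fun C => Bi ⊆ C), (C \ oldSet n m).card

/-- Partitions of `{1,…,n+m}` extending the partition `πP` of the old elements. -/
def extensions (n m : ℕ) (πP : Finset (Finset (Fin (n + m)))) :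
    Finset (Finset (Finset (Fin (n + m)))) :=
  Finset.univ.filter fun ρ => IsPartOn Finset.univ ρ ∧ restrictPart ρ (oldSet n m) = πP

/-- Conditional expectation given complete information (the initial partition `πP`). -/
def condExpPi (σ : ℝ) (V : ℕ → ℕ → ℝ) (n m : ℕ) (πP : Finset (Finset (Fin (n + m))))
    (f : Finset (Finset (Fin (n + m))) → ℝ) : ℝ :=
  (∑ ρ ∈ extensions n m πP, f ρ * gibbsW σ (V (n + m)) ρ) /
    (∑ ρ ∈ extensions n m πP, gibbsW σ (V (n + m)) ρ)

/-- Partitions of `{1,…,n+m}` whose restriction to the old elements has exactly `j` blocks. -/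
def withJ (n m j : ℕ) : Finset (Finset (Finset (Fin (n + m)))) :=
  Finset.univ.filter fun ρ =>
    IsPartOn Finset.univ ρ ∧ (restrictPart ρ (oldSet n m)).card = j

/-- Partitions of `s` with exactly `j` blocks. -/
def partsJOf {α : Type*} [Fintype α] (s : Finset α) (j : ℕ) :
    Finset (Finset (Finset α)) :=
  Finset.univ.filter fun π' => IsPartOn s π' ∧ π'.card = j

/-- Conditional expectation given the incomplete information `K_n = j`. -/
def condExpK (σ : ℝ) (V : ℕ → ℕ → ℝ) (n m j : ℕ)
    (f : Finset (Finset (Fin (n + m))) → ℝ) : ℝ :=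
  (∑ ρ ∈ withJ n m j, f ρ * gibbsW σ (V (n + m)) ρ) /
    (∑ π' ∈ partsJOf (oldSet n m) j, gibbsW σ (V n) π')

/-- Number of old blocks (indexed by `B`) re-observed in the additional sample. -/
def RcntB (n m j : ℕ) (B : Fin j → Finset (Fin (n + m)))
    (ρ : Finset (Finset (Fin (n + m)))) : ℕ :=
  (Finset.univ.filter fun i : Fin j => Scount n m (B i) ρ ≠ 0).card

/-- Number of old blocks (indexed by `B`) re-observed with frequency `l`. -/
def RlcntB (n m j l : ℕ) (B : Fin j → Finset (Fin (n + m)))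
    (ρ : Finset (Finset (Fin (n + m)))) : ℕ :=
  (Finset.univ.filter fun i : Fin j => Scount n m (B i) ρ = l).card

/-- Number of blocks of the restriction whose containing block has a new element. -/
def Rcnt (n m : ℕ) (ρ : Finset (Finset (Fin (n + m)))) : ℕ :=
  ((restrictPart ρ (oldSet n m)).filter fun Bi =>
    ∃ C ∈ ρ, Bi ⊆ C ∧ (C \ oldSet n m) ≠ ∅).card

/-- Number of blocks of the restriction whose containing block has exactly `l` new elements. -/
def Rlcnt (n m l : ℕ) (ρ : Finset (Finset (Fin (n + m)))) : ℕ :=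
  ((restrictPart ρ (oldSet n m)).filter fun Bi =>
    ∃ C ∈ ρ, Bi ⊆ C ∧ (C \ oldSet n m).card = l).card

/-- Number of bijections from `Fin j` onto the blocks of `π'` satisfying `Q`. -/
def bijCount {α : Type*} [Fintype α] (j : ℕ) (π' : Finset (Finset α))
    (Q : (Fin j → Finset α) → Prop) : ℕ :=
  ((Finset.univ : Finset (Fin j → Finset α)).filter fun β =>
    Function.Injective β ∧ Finset.image β Finset.univ = π' ∧ Q β).card

/-- Conditional expectation given almost-complete information. -/
def condExpTau (σ : ℝ) (V : ℕ → ℕ → ℝ) (n m j p : ℕ) (τ : Fin p → Fin j) (nτ : Fin p → ℕ)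
    (f : Finset (Finset (Fin (n + m))) → ℝ) : ℝ :=
  (∑ ρ ∈ withJ n m j,
      (bijCount j (restrictPart ρ (oldSet n m)) (fun β => ∀ i, (β (τ i)).card = nτ i) : ℝ) *
        f ρ * gibbsW σ (V (n + m)) ρ) /
    (∑ π' ∈ partsJOf (oldSet n m) j,
      (bijCount j π' (fun β => ∀ i, (β (τ i)).card = nτ i) : ℝ) * gibbsW σ (V n) π')

section Helpers

set_option linter.unusedSectionVars false

variable {α : Type*} [Fintype α] [DecidableEq α]

lemma IsPartOn.blocks_eq {s : Finset α} {P : Finset (Finset α)} (h : IsPartOn s P)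
    {C D : Finset α} (hC : C ∈ P) (hD : D ∈ P) {x : α} (hxC : x ∈ C) (hxD : x ∈ D) :
    C = D := by
  obtain ⟨E, -, hE⟩ := h.2.2 x (h.1 C hC hxC)
  rw [hE C ⟨hC, hxC⟩, hE D ⟨hD, hxD⟩]

lemma IsPartOn.block_nonempty {s : Finset α} {P : Finset (Finset α)} (h : IsPartOn s P)
    {C : Finset α} (hC : C ∈ P) : C.Nonempty := by
  rw [Finset.nonempty_iff_ne_empty]
  rintro rfl; exact h.2.1 hC

lemma IsPartOn.sum_card {s : Finset α} {P : Finset (Finset α)} (h : IsPartOn s P) :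
    ∑ C ∈ P, C.card = s.card := by
  have hs : s = P.biUnion id := by
    ext x
    simp only [Finset.mem_biUnion, id]
    constructor
    · intro hx
      obtain ⟨C, ⟨hC, hxC⟩, -⟩ := h.2.2 x hx
      exact ⟨C, hC, hxC⟩
    · rintro ⟨C, hC, hxC⟩
      exact h.1 C hC hxC
  have hdisj : ∀ C ∈ P, ∀ D ∈ P, C ≠ D → Disjoint (id C) (id D) := by
    intro C hC D hD hne
    rw [Finset.disjoint_left]
    intro x hxC hxD
    exact hne (h.blocks_eq hC hD hxC hxD)
  rw [hs, Finset.card_biUnion hdisj]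
  rfl

lemma restrictPart_self {s : Finset α} {P : Finset (Finset α)} (h : IsPartOn s P) :
    restrictPart P s = P := by
  unfold restrictPart
  have himg : P.image (fun C => C ∩ s) = P := by
    have h1 : ∀ C ∈ P, C ∩ s = C := fun C hC => Finset.inter_eq_left.mpr (h.1 C hC)
    rw [Finset.image_congr (fun C hC => h1 C hC), Finset.image_id']
  rw [himg, Finset.erase_eq_of_notMem h.2.1]

lemma restrictPart_restrictPart (P : Finset (Finset α)) {s u : Finset α} (hsu : s ⊆ u) :
    restrictPart (restrictPart P u) s = restrictPart P s := by
  unfold restrictPart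
  ext X
  simp only [Finset.mem_erase, Finset.mem_image]
  constructor
  · rintro ⟨hXne, E, ⟨-, D, hD, rfl⟩, rfl⟩
    exact ⟨hXne, D, hD, by rw [Finset.inter_assoc, Finset.inter_eq_right.mpr hsu]⟩
  · rintro ⟨hXne, D, hD, rfl⟩
    refine ⟨hXne, D ∩ u, ⟨?_, D, hD, rfl⟩,
      by rw [Finset.inter_assoc, Finset.inter_eq_right.mpr hsu]⟩
    intro h0
    apply hXne
    have hsub : D ∩ s ⊆ D ∩ u := Finset.inter_subset_inter (Finset.Subset.refl D) hsu
    rw [h0] at hsub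
    exact Finset.subset_empty.mp hsub

lemma isPartOn_restrict {P : Finset (Finset α)} {s u : Finset α} (h : IsPartOn u P)
    (hsu : s ⊆ u) : IsPartOn s (restrictPart P s) := by
  refine ⟨?_, ?_, ?_⟩
  · intro X hX
    simp only [restrictPart, Finset.mem_erase, Finset.mem_image] at hX
    obtain ⟨-, D, -, rfl⟩ := hX
    exact Finset.inter_subset_right
  · simp [restrictPart]
  · intro x hx
    obtain ⟨D, ⟨hD, hxD⟩, hDu⟩ := h.2.2 x (hsu hx)
    refine ⟨D ∩ s, ⟨?_, Finset.mem_inter.mpr ⟨hxD, hx⟩⟩, ?_⟩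
    · simp only [restrictPart, Finset.mem_erase, Finset.mem_image]
      exact ⟨by rw [← Finset.nonempty_iff_ne_empty]; exact ⟨x, Finset.mem_inter.mpr ⟨hxD, hx⟩⟩,
        D, hD, rfl⟩
    · rintro Y ⟨hY, hxY⟩
      simp only [restrictPart, Finset.mem_erase, Finset.mem_image] at hY
      obtain ⟨-, E, hE, rfl⟩ := hY
      rw [hDu E ⟨hE, (Finset.mem_inter.mp hxY).1⟩]


/-- Unnormalized Ewens–Pitman weight of a partition. -/
def Wgt (θ σ : ℝ) (ρ : Finset (Finset α)) : ℝ :=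
  (∏ i ∈ Finset.range ρ.card, (θ + (i : ℝ) * σ)) *
    ∏ C ∈ ρ, risingFac (1 - σ) (C.card - 1)

lemma risingFac_succ (x : ℝ) (k : ℕ) :
    risingFac x (k + 1) = risingFac x k * (x + k) := Finset.prod_range_succ _ _

lemma risingFac_zero (x : ℝ) : risingFac x 0 = 1 := Finset.prod_range_zero _

lemma image_inter_of_subsets {ρ : Finset (Finset α)} {u : Finset α}
    (h : ∀ C ∈ ρ, C ⊆ u) : ρ.image (fun C => C ∩ u) = ρ := by
  rw [Finset.image_congr (fun C hC => Finset.inter_eq_left.mpr (h C hC)), Finset.image_id']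

lemma Wgt_insert_singleton (θ σ : ℝ) {ρ : Finset (Finset α)} {a : α} (h : {a} ∉ ρ) :
    Wgt θ σ (insert {a} ρ) = (θ + (ρ.card : ℝ) * σ) * Wgt θ σ ρ := by
  unfold Wgt
  rw [Finset.card_insert_of_notMem h, Finset.prod_insert h, Finset.prod_range_succ]
  simp only [Finset.card_singleton, Nat.sub_self, risingFac_zero]
  ring

lemma Wgt_insert_block (θ σ : ℝ) {ρ : Finset (Finset α)} {C : Finset α} (hC : C ∈ ρ)
    {a : α} (haC : a ∉ C) (hne : C.Nonempty) (hnew : insert a C ∉ ρ.erase C) :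
    Wgt θ σ (insert (insert a C) (ρ.erase C)) = ((C.card : ℝ) - σ) * Wgt θ σ ρ := by
  obtain ⟨k, hk⟩ : ∃ k, C.card = k + 1 :=
    ⟨C.card - 1, (Nat.succ_pred_eq_of_pos (Finset.card_pos.mpr hne)).symm⟩
  unfold Wgt
  rw [Finset.card_insert_of_notMem hnew, Finset.card_erase_of_mem hC,
    Nat.sub_add_cancel (Finset.card_pos.mpr ⟨C, hC⟩), Finset.prod_insert hnew]
  have hcard : (insert a C).card - 1 = k + 1 := by
    rw [Finset.card_insert_of_notMem haC, hk]
    omega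
  rw [hcard, risingFac_succ]
  have hblocks : ∏ X ∈ ρ, risingFac (1 - σ) (X.card - 1)
      = risingFac (1 - σ) k * ∏ X ∈ ρ.erase C, risingFac (1 - σ) (X.card - 1) := by
    rw [← Finset.mul_prod_erase ρ _ hC, hk]
    norm_num
  rw [hblocks]
  have hx : (1 - σ + (k : ℝ)) = (C.card : ℝ) - σ := by rw [hk]; push_cast; ring
  rw [← hx]; ring

lemma isPartOn_insert_singleton {u : Finset α} {ρ : Finset (Finset α)}
    (hpart : IsPartOn u ρ) {a : α} (ha : a ∉ u) :
    IsPartOn (insert a u) (insert {a} ρ) := by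
  refine ⟨?_, ?_, ?_⟩
  · intro X hX
    rcases Finset.mem_insert.mp hX with rfl | hX
    · exact Finset.singleton_subset_iff.mpr (Finset.mem_insert_self a u)
    · exact (hpart.1 X hX).trans (Finset.subset_insert a u)
  · intro h0
    rcases Finset.mem_insert.mp h0 with h | h
    · exact (Finset.singleton_ne_empty a) h.symm
    · exact hpart.2.1 h
  · intro x hx
    rcases Finset.mem_insert.mp hx with rfl | hx
    · refine ⟨{x}, ⟨Finset.mem_insert_self _ _, Finset.mem_singleton_self x⟩, ?_⟩
      rintro Y ⟨hY, hxY⟩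
      rcases Finset.mem_insert.mp hY with rfl | hY
      · rfl
      · exact absurd (hpart.1 Y hY hxY) ha
    · obtain ⟨D, ⟨hD, hxD⟩, hDu⟩ := hpart.2.2 x hx
      refine ⟨D, ⟨Finset.mem_insert_of_mem hD, hxD⟩, ?_⟩
      rintro Y ⟨hY, hxY⟩
      rcases Finset.mem_insert.mp hY with rfl | hY
      · exfalso; exact ha (Finset.mem_singleton.mp hxY ▸ hx)
      · exact hDu Y ⟨hY, hxY⟩

lemma restrict_insert_singleton {u : Finset α} {ρ : Finset (Finset α)}
    (hpart : IsPartOn u ρ) {a : α} (ha : a ∉ u) :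
    restrictPart (insert {a} ρ) u = ρ := by
  unfold restrictPart
  rw [Finset.image_insert, Finset.singleton_inter_of_notMem ha,
    image_inter_of_subsets hpart.1, Finset.erase_insert hpart.2.1]

lemma isPartOn_insert_block {u : Finset α} {ρ : Finset (Finset α)}
    (hpart : IsPartOn u ρ) {a : α} (ha : a ∉ u) {C : Finset α} (hC : C ∈ ρ) :
    IsPartOn (insert a u) (insert (insert a C) (ρ.erase C)) := by
  refine ⟨?_, ?_, ?_⟩
  · intro X hX
    rcases Finset.mem_insert.mp hX with rfl | hX
    · exact Finset.insert_subset_insert a (hpart.1 C hC)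
    · exact (hpart.1 X (Finset.mem_of_mem_erase hX)).trans (Finset.subset_insert a u)
  · intro h0
    rcases Finset.mem_insert.mp h0 with h | h
    · exact (Finset.insert_ne_empty a C) h.symm
    · exact hpart.2.1 (Finset.mem_of_mem_erase h)
  · intro x hx
    rcases Finset.mem_insert.mp hx with rfl | hx
    · refine ⟨insert x C, ⟨Finset.mem_insert_self _ _, Finset.mem_insert_self x C⟩, ?_⟩
      rintro Y ⟨hY, hxY⟩
      rcases Finset.mem_insert.mp hY with rfl | hY
      · rfl
      · exact absurd (hpart.1 Y (Finset.mem_of_mem_erase hY) hxY) ha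
    · by_cases hxC : x ∈ C
      · refine ⟨insert a C, ⟨Finset.mem_insert_self _ _, Finset.mem_insert_of_mem hxC⟩, ?_⟩
        rintro Y ⟨hY, hxY⟩
        rcases Finset.mem_insert.mp hY with rfl | hY
        · rfl
        · exfalso
          exact (Finset.mem_erase.mp hY).1
            (hpart.blocks_eq (Finset.mem_of_mem_erase hY) hC hxY hxC)
      · obtain ⟨D, ⟨hD, hxD⟩, hDu⟩ := hpart.2.2 x hx
        have hDC : D ≠ C := fun h => hxC (h ▸ hxD)
        refine ⟨D, ⟨Finset.mem_insert_of_mem (Finset.mem_erase.mpr ⟨hDC, hD⟩), hxD⟩, ?_⟩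
        rintro Y ⟨hY, hxY⟩
        rcases Finset.mem_insert.mp hY with rfl | hY
        · exfalso
          rcases Finset.mem_insert.mp hxY with h | h
          · exact ha (h ▸ hx)
          · exact hxC h
        · exact hDu Y ⟨Finset.mem_of_mem_erase hY, hxY⟩

lemma restrict_insert_block {u : Finset α} {ρ : Finset (Finset α)}
    (hpart : IsPartOn u ρ) {a : α} (ha : a ∉ u) {C : Finset α} (hC : C ∈ ρ) :
    restrictPart (insert (insert a C) (ρ.erase C)) u = ρ := by
  unfold restrictPart
  rw [Finset.image_insert, Finset.insert_inter_of_notMem ha,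
    Finset.inter_eq_left.mpr (hpart.1 C hC),
    image_inter_of_subsets (fun D hD => hpart.1 D (Finset.mem_of_mem_erase hD)),
    Finset.insert_erase hC, Finset.erase_eq_of_notMem hpart.2.1]

lemma fiber_mem {u : Finset α} {a : α} (ha : a ∉ u) {ρ' ρ : Finset (Finset α)}
    (hpart' : IsPartOn (insert a u) ρ') (hres : restrictPart ρ' u = ρ) :
    ρ' = insert {a} ρ ∨ ∃ C ∈ ρ, ρ' = insert (insert a C) (ρ.erase C) := by
  obtain ⟨D, ⟨hD, haD⟩, hDu⟩ := hpart'.2.2 a (Finset.mem_insert_self a u)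
  have haE : ∀ E ∈ ρ', E ≠ D → a ∉ E := fun E hE hne haE' => hne (hDu E ⟨hE, haE'⟩)
  have hEu : ∀ E ∈ ρ', E ≠ D → E ∩ u = E := by
    intro E hE hne
    apply Finset.inter_eq_left.mpr
    intro x hx
    rcases Finset.mem_insert.mp (hpart'.1 E hE hx) with rfl | h
    · exact absurd hx (haE E hE hne)
    · exact h
  by_cases hDa : D = {a}
  · left
    subst hDa
    have hkey : restrictPart ρ' u = ρ'.erase {a} := by
      unfold restrictPart
      ext X
      simp only [Finset.mem_erase, Finset.mem_image]
      constructor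
      · rintro ⟨hXne, E, hE, rfl⟩
        by_cases hED : E = {a}
        · subst hED
          rw [Finset.singleton_inter_of_notMem ha] at hXne
          exact absurd rfl hXne
        · rw [hEu E hE hED]
          exact ⟨hED, hE⟩
      · rintro ⟨hXa, hX⟩
        exact ⟨Finset.nonempty_iff_ne_empty.mp (hpart'.block_nonempty hX), X, hX, hEu X hX hXa⟩
    rw [hkey] at hres
    rw [← hres, Finset.insert_erase hD]
  · right
    have hbD : ∃ b ∈ D, b ≠ a := by
      by_contra hcon
      push_neg at hcon
      exact hDa (Finset.eq_singleton_iff_unique_mem.mpr ⟨haD, hcon⟩)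
    set C := D.erase a with hCdef
    have hCne : C.Nonempty := by
      obtain ⟨b, hb, hba⟩ := hbD
      exact ⟨b, Finset.mem_erase.mpr ⟨hba, hb⟩⟩
    have hDC : D = insert a C := (Finset.insert_erase haD).symm
    have hCu : D ∩ u = C := by
      ext x
      simp only [Finset.mem_inter, hCdef, Finset.mem_erase]
      constructor
      · rintro ⟨h1, h2⟩
        exact ⟨fun h => ha (h ▸ h2), h1⟩
      · rintro ⟨h1, h2⟩
        refine ⟨h2, ?_⟩
        rcases Finset.mem_insert.mp (hpart'.1 D hD h2) with rfl | h
        · exact absurd rfl h1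
        · exact h
    have hCρ : C ∈ ρ := by
      rw [← hres]
      unfold restrictPart
      exact Finset.mem_erase.mpr ⟨Finset.nonempty_iff_ne_empty.mp hCne,
        Finset.mem_image.mpr ⟨D, hD, hCu⟩⟩
    refine ⟨C, hCρ, ?_⟩
    have herase : ρ.erase C = ρ'.erase D := by
      rw [← hres]
      unfold restrictPart
      ext X
      simp only [Finset.mem_erase, Finset.mem_image]
      constructor
      · rintro ⟨hXC, hXne, E, hE, rfl⟩
        by_cases hED : E = D
        · subst hED
          exact absurd hCu hXC
        · rw [hEu E hE hED]
          exact ⟨hED, hE⟩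
      · rintro ⟨hXD, hX⟩
        have hXu := hEu X hX hXD
        refine ⟨?_, Finset.nonempty_iff_ne_empty.mp (hpart'.block_nonempty hX), X, hX, hXu⟩
        intro hXC
        obtain ⟨b, hb⟩ := hCne
        have hbD' : b ∈ D := Finset.mem_of_mem_erase hb
        exact hXD (hpart'.blocks_eq hX hD (hXC ▸ hb) hbD')
    rw [herase, ← hDC, Finset.insert_erase hD]

/-- Extensions of `π0` (a partition of `s`) to partitions of `v`. -/
def PartsExt (v s : Finset α) (π0 : Finset (Finset α)) : Finset (Finset (Finset α)) :=
  Finset.univ.filter (fun ρ => IsPartOn v ρ ∧ restrictPart ρ s = π0)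

lemma mem_PartsExt {v s : Finset α} {π0 ρ : Finset (Finset α)} :
    ρ ∈ PartsExt v s π0 ↔ IsPartOn v ρ ∧ restrictPart ρ s = π0 := by
  unfold PartsExt
  simp only [Finset.mem_filter, Finset.mem_univ, true_and]

lemma partition_insert_sum (u s : Finset α) (hsu : s ⊆ u) (π0 : Finset (Finset α))
    (a : α) (ha : a ∉ u) (F : Finset (Finset α) → ℝ) :
    ∑ ρ' ∈ PartsExt (insert a u) s π0, F ρ'
      = ∑ ρ ∈ PartsExt u s π0,
          (F (insert {a} ρ) + ∑ C ∈ ρ, F (insert (insert a C) (ρ.erase C))) := by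
  have hmaps : ∀ ρ' ∈ PartsExt (insert a u) s π0,
      restrictPart ρ' u ∈ PartsExt u s π0 := by
    intro ρ' hρ'
    rw [mem_PartsExt] at *
    exact ⟨isPartOn_restrict hρ'.1 (Finset.subset_insert a u),
      by rw [restrictPart_restrictPart ρ' hsu]; exact hρ'.2⟩
  rw [← Finset.sum_fiberwise_of_maps_to hmaps F]
  refine Finset.sum_congr rfl ?_
  intro ρ hρ
  rw [mem_PartsExt] at hρ
  obtain ⟨hpart, hP⟩ := hρ
  have haC : ∀ C ∈ ρ, a ∉ C := fun C hC h => ha (hpart.1 C hC h)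
  have hane : {a} ∉ ρ := fun h => ha (hpart.1 _ h (Finset.mem_singleton_self a))
  have hfiber : (PartsExt (insert a u) s π0).filter (fun ρ' => restrictPart ρ' u = ρ)
      = insert (insert {a} ρ) (ρ.image fun C => insert (insert a C) (ρ.erase C)) := by
    ext ρ'
    simp only [Finset.mem_filter, mem_PartsExt, Finset.mem_insert, Finset.mem_image]
    constructor
    · rintro ⟨⟨hpart', -⟩, hres⟩
      rcases fiber_mem ha hpart' hres with h | ⟨C, hC, h⟩
      · exact Or.inl h
      · exact Or.inr ⟨C, hC, h.symm⟩
    · rintro (rfl | ⟨C, hC, rfl⟩)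
      · have h1 := restrict_insert_singleton hpart ha
        refine ⟨⟨isPartOn_insert_singleton hpart ha, ?_⟩, h1⟩
        rw [← restrictPart_restrictPart _ hsu, h1]; exact hP
      · have h1 := restrict_insert_block hpart ha hC
        refine ⟨⟨isPartOn_insert_block hpart ha hC, ?_⟩, h1⟩
        rw [← restrictPart_restrictPart _ hsu, h1]; exact hP
  rw [hfiber]
  have hnotmem : insert {a} ρ ∉ ρ.image fun C => insert (insert a C) (ρ.erase C) := by
    rw [Finset.mem_image]
    rintro ⟨C, hC, heq⟩
    have h1 : ({a} : Finset α) ∈ insert (insert a C) (ρ.erase C) := by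
      rw [heq]; exact Finset.mem_insert_self _ _
    rcases Finset.mem_insert.mp h1 with h2 | h2
    · obtain ⟨b, hb⟩ := hpart.block_nonempty hC
      have hba : b ∈ ({a} : Finset α) := h2 ▸ Finset.mem_insert_of_mem hb
      exact haC C hC (Finset.mem_singleton.mp hba ▸ hb)
    · exact hane (Finset.mem_of_mem_erase h2)
  rw [Finset.sum_insert hnotmem]
  congr 1
  rw [Finset.sum_image ?hinj]
  case hinj =>
    intro C hC C' hC' heq
    have h1 : insert a C ∈ insert (insert a C') (ρ.erase C') := by
      rw [← show insert (insert a C) (ρ.erase C) = insert (insert a C') (ρ.erase C') from heq]; exact Finset.mem_insert_self _ _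
    rcases Finset.mem_insert.mp h1 with h2 | h2
    · have h3 := congrArg (fun s => Finset.erase s a) h2
      simp only [Finset.erase_insert (haC C hC), Finset.erase_insert (haC C' hC')] at h3
      exact h3
    · exact (ha (hpart.1 _ (Finset.mem_of_mem_erase h2) (Finset.mem_insert_self a _))).elim

lemma Wgt_insert_top (θ σ : ℝ) {ρ₀ : Finset (Finset α)} {X : Finset α} (hX : X ∉ ρ₀) :
    Wgt θ σ (insert X ρ₀) = θ * risingFac (1 - σ) (X.card - 1) * Wgt (θ + σ) σ ρ₀ := by
  unfold Wgt
  rw [Finset.card_insert_of_notMem hX, Finset.prod_insert hX, Finset.prod_range_succ']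
  have hcg : ∀ i ∈ Finset.range ρ₀.card,
      (θ + (((i : ℕ) + 1 : ℕ) : ℝ) * σ) = (θ + σ + (i : ℝ) * σ) := by
    intro i _; push_cast; ring
  rw [Finset.prod_congr rfl hcg]
  push_cast
  ring

lemma key_sum (θ σ : ℝ) (s : Finset α) (π0 : Finset (Finset α)) (hπ0 : IsPartOn s π0)
    (t : Finset α) (hst : Disjoint s t) :
    ∑ ρ ∈ PartsExt (s ∪ t) s π0, Wgt θ σ ρ
      = risingFac (θ + s.card) t.card * Wgt θ σ π0 := by
  revert hst
  induction t using Finset.induction_on with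
  | empty =>
    intro _
    rw [Finset.union_empty]
    have hset : PartsExt s s π0 = {π0} := by
      ext ρ
      rw [mem_PartsExt, Finset.mem_singleton]
      constructor
      · rintro ⟨hρ, hres⟩
        rw [← hres, restrictPart_self hρ]
      · rintro rfl
        exact ⟨hπ0, restrictPart_self hπ0⟩
    rw [hset, Finset.sum_singleton, Finset.card_empty, risingFac_zero, one_mul]
  | @insert a t' ha ih =>
    intro hst
    have has : a ∉ s := fun h => (Finset.disjoint_left.mp hst h) (Finset.mem_insert_self a t')
    have hst' : Disjoint s t' := hst.mono_right (Finset.subset_insert a t')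
    have ha' : a ∉ s ∪ t' := by
      intro h
      rcases Finset.mem_union.mp h with h | h
      · exact has h
      · exact ha h
    rw [Finset.union_insert,
      partition_insert_sum (s ∪ t') s Finset.subset_union_left π0 a ha' (Wgt θ σ)]
    have hterm : ∀ ρ ∈ PartsExt (s ∪ t') s π0,
        Wgt θ σ (insert {a} ρ) + ∑ C ∈ ρ, Wgt θ σ (insert (insert a C) (ρ.erase C))
          = (θ + ((s ∪ t').card : ℝ)) * Wgt θ σ ρ := by
      intro ρ hρ
      obtain ⟨hρp, -⟩ := mem_PartsExt.mp hρ
      have hane : {a} ∉ ρ := fun h => ha' (hρp.1 _ h (Finset.mem_singleton_self a))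
      rw [Wgt_insert_singleton θ σ hane]
      have hCsum : ∀ C ∈ ρ, Wgt θ σ (insert (insert a C) (ρ.erase C))
          = ((C.card : ℝ) - σ) * Wgt θ σ ρ := by
        intro C hC
        refine Wgt_insert_block θ σ hC (fun h => ha' (hρp.1 C hC h))
          (hρp.block_nonempty hC) ?_
        intro h
        exact ha' (hρp.1 _ (Finset.mem_of_mem_erase h) (Finset.mem_insert_self a _))
      rw [Finset.sum_congr rfl hCsum, ← Finset.sum_mul]
      have hsum : ∑ C ∈ ρ, ((C.card : ℝ) - σ)
          = ((s ∪ t').card : ℝ) - (ρ.card : ℝ) * σ := by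
        rw [Finset.sum_sub_distrib, Finset.sum_const, ← Nat.cast_sum, hρp.sum_card]
        simp [nsmul_eq_mul]
      rw [hsum]
      ring
    rw [Finset.sum_congr rfl hterm, ← Finset.mul_sum, ih hst',
      Finset.card_insert_of_notMem ha, risingFac_succ]
    have hcard : ((s ∪ t').card : ℝ) = (s.card : ℝ) + (t'.card : ℝ) := by
      rw [Finset.card_union_of_disjoint hst']; push_cast; ring
    rw [hcard]
    ring


lemma isPartOn_erase {s : Finset α} {P : Finset (Finset α)} (h : IsPartOn s P)
    {Bi : Finset α} (hBi : Bi ∈ P) : IsPartOn (s \ Bi) (P.erase Bi) := by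
  refine ⟨?_, fun h0 => h.2.1 (Finset.mem_of_mem_erase h0), ?_⟩
  · intro C hC x hx
    exact Finset.mem_sdiff.mpr ⟨h.1 C (Finset.mem_of_mem_erase hC) hx,
      fun hxB => (Finset.mem_erase.mp hC).1
        (h.blocks_eq (Finset.mem_of_mem_erase hC) hBi hx hxB)⟩
  · intro x hx
    obtain ⟨hxs, hxB⟩ := Finset.mem_sdiff.mp hx
    obtain ⟨D, ⟨hD, hxD⟩, hDu⟩ := h.2.2 x hxs
    have hDBi : D ≠ Bi := fun hh => hxB (hh ▸ hxD)
    exact ⟨D, ⟨Finset.mem_erase.mpr ⟨hDBi, hD⟩, hxD⟩,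
      fun Y hY => hDu Y ⟨Finset.mem_of_mem_erase hY.1, hY.2⟩⟩

lemma isPartOn_insert_frozen {v : Finset α} {ρ₀ : Finset (Finset α)} {Bi : Finset α}
    (hρ₀ : IsPartOn (v \ Bi) ρ₀) (hBv : Bi ⊆ v) (hBne : Bi.Nonempty) :
    IsPartOn v (insert Bi ρ₀) := by
  refine ⟨?_, ?_, ?_⟩
  · intro C hC
    rcases Finset.mem_insert.mp hC with rfl | hC
    · exact hBv
    · exact (hρ₀.1 C hC).trans (Finset.sdiff_subset)
  · intro h0
    rcases Finset.mem_insert.mp h0 with h | h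
    · exact Finset.nonempty_iff_ne_empty.mp hBne h.symm
    · exact hρ₀.2.1 h
  · intro x hx
    by_cases hxB : x ∈ Bi
    · refine ⟨Bi, ⟨Finset.mem_insert_self _ _, hxB⟩, ?_⟩
      rintro Y ⟨hY, hxY⟩
      rcases Finset.mem_insert.mp hY with rfl | hY
      · rfl
      · exact absurd hxB ((Finset.mem_sdiff.mp (hρ₀.1 Y hY hxY)).2).elim
    · obtain ⟨D, ⟨hD, hxD⟩, hDu⟩ := hρ₀.2.2 x (Finset.mem_sdiff.mpr ⟨hx, hxB⟩)
      refine ⟨D, ⟨Finset.mem_insert_of_mem hD, hxD⟩, ?_⟩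
      rintro Y ⟨hY, hxY⟩
      rcases Finset.mem_insert.mp hY with rfl | hY
      · exact absurd hxY hxB
      · exact hDu Y ⟨hY, hxY⟩

lemma notMem_frozen {v : Finset α} {ρ₀ : Finset (Finset α)} {Bi : Finset α}
    (hρ₀ : IsPartOn (v \ Bi) ρ₀) (hBne : Bi.Nonempty) : Bi ∉ ρ₀ := by
  intro h
  obtain ⟨x, hx⟩ := hBne
  exact (Finset.mem_sdiff.mp (hρ₀.1 Bi h hx)).2 hx

lemma restrict_erase_frozen {v s : Finset α} {ρ : Finset (Finset α)} (hρ : IsPartOn v ρ)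
    {Bi : Finset α} (hBiρ : Bi ∈ ρ) (hBs : Bi ⊆ s) (hBne : Bi.Nonempty) :
    restrictPart (ρ.erase Bi) (s \ Bi) = (restrictPart ρ s).erase Bi := by
  have hCs : ∀ C ∈ ρ, C ≠ Bi → C ∩ (s \ Bi) = C ∩ s := by
    intro C hC hCBi
    ext x
    simp only [Finset.mem_inter, Finset.mem_sdiff]
    constructor
    · rintro ⟨h1, h2, -⟩; exact ⟨h1, h2⟩
    · rintro ⟨h1, h2⟩
      exact ⟨h1, h2, fun hB => hCBi (hρ.blocks_eq hC hBiρ h1 hB)⟩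
  unfold restrictPart
  ext X
  simp only [Finset.mem_erase, Finset.mem_image]
  constructor
  · rintro ⟨hXne, C, ⟨hCBi, hCρ⟩, rfl⟩
    rw [hCs C hCρ hCBi]
    rw [hCs C hCρ hCBi] at hXne
    refine ⟨?_, hXne, C, hCρ, rfl⟩
    intro hEq
    obtain ⟨x, hxB⟩ := hBne
    have hxC : x ∈ C := (Finset.mem_inter.mp (hEq ▸ hxB : x ∈ C ∩ s)).1
    exact hCBi (hρ.blocks_eq hCρ hBiρ hxC hxB)
  · rintro ⟨hXB, hXne, C, hCρ, rfl⟩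
    have hCBi : C ≠ Bi := fun h => hXB (by rw [h, Finset.inter_eq_left.mpr hBs])
    exact ⟨hXne, C, ⟨hCBi, hCρ⟩, hCs C hCρ hCBi⟩

lemma restrict_insert_frozen {v s : Finset α} (hsv : s ⊆ v) {ρ₀ : Finset (Finset α)}
    {Bi : Finset α} (hρ₀ : IsPartOn (v \ Bi) ρ₀) (hBs : Bi ⊆ s) (hBne : Bi.Nonempty) :
    restrictPart (insert Bi ρ₀) s = insert Bi (restrictPart ρ₀ (s \ Bi)) := by
  have hCs : ∀ C ∈ ρ₀, C ∩ s = C ∩ (s \ Bi) := by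
    intro C hC
    ext x
    simp only [Finset.mem_inter, Finset.mem_sdiff]
    constructor
    · rintro ⟨h1, h2⟩
      exact ⟨h1, h2, fun hB => (Finset.mem_sdiff.mp (hρ₀.1 C hC h1)).2 hB⟩
    · rintro ⟨h1, h2, -⟩; exact ⟨h1, h2⟩
  unfold restrictPart
  ext X
  simp only [Finset.mem_erase, Finset.mem_image, Finset.mem_insert]
  constructor
  · rintro ⟨hXne, C, (rfl | hC), rfl⟩
    · exact Or.inl (Finset.inter_eq_left.mpr hBs)
    · rw [hCs C hC] at hXne ⊢
      exact Or.inr ⟨hXne, C, hC, rfl⟩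
  · rintro (h | ⟨hXne, C, hC, rfl⟩)
    · exact ⟨h ▸ Finset.nonempty_iff_ne_empty.mp hBne, Bi, Or.inl rfl,
        by rw [Finset.inter_eq_left.mpr hBs, h]⟩
    · exact ⟨hXne, C, Or.inr hC, hCs C hC⟩

lemma frozen_sum (v s : Finset α) (hsv : s ⊆ v) (π0 : Finset (Finset α))
    (hπ0 : IsPartOn s π0) (Bi : Finset α) (hBi : Bi ∈ π0) (F : Finset (Finset α) → ℝ) :
    ∑ ρ ∈ (PartsExt v s π0).filter (fun ρ => Bi ∈ ρ), F ρ
      = ∑ ρ₀ ∈ PartsExt (v \ Bi) (s \ Bi) (π0.erase Bi), F (insert Bi ρ₀) := by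
  have hBs : Bi ⊆ s := hπ0.1 Bi hBi
  have hBne : Bi.Nonempty := hπ0.block_nonempty hBi
  refine Finset.sum_nbij' (fun ρ => ρ.erase Bi) (fun ρ₀ => insert Bi ρ₀) ?_ ?_ ?_ ?_ ?_
  · intro ρ hρ
    obtain ⟨hm, hBiρ⟩ := Finset.mem_filter.mp hρ
    obtain ⟨hpart, hres⟩ := mem_PartsExt.mp hm
    refine mem_PartsExt.mpr ⟨isPartOn_erase hpart hBiρ, ?_⟩
    rw [restrict_erase_frozen hpart hBiρ hBs hBne, hres]
  · intro ρ₀ hρ₀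
    obtain ⟨hpart, hres⟩ := mem_PartsExt.mp hρ₀
    refine Finset.mem_filter.mpr ⟨mem_PartsExt.mpr
      ⟨isPartOn_insert_frozen hpart (hBs.trans hsv) hBne, ?_⟩, Finset.mem_insert_self _ _⟩
    rw [restrict_insert_frozen hsv hpart hBs hBne, hres, Finset.insert_erase hBi]
  · intro ρ hρ
    exact Finset.insert_erase (Finset.mem_filter.mp hρ).2
  · intro ρ₀ hρ₀
    obtain ⟨hpart, -⟩ := mem_PartsExt.mp hρ₀
    exact Finset.erase_insert (notMem_frozen hpart hBne)
  · intro ρ hρ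
    rw [Finset.insert_erase (Finset.mem_filter.mp hρ).2]

lemma risingFac_add (x : ℝ) (a b : ℕ) :
    risingFac x (a + b) = risingFac x a * risingFac (x + a) b := by
  unfold risingFac
  rw [Finset.prod_range_add]
  congr 1
  refine Finset.prod_congr rfl fun i _ => ?_
  push_cast
  ring

end Helpers

set_option linter.unusedSectionVars false in
lemma oldSet_card (n m : ℕ) : (oldSet n m).card = n := by
  have h : oldSet n m = Finset.univ.map (Fin.castAddEmb m) := by
    ext x
    simp only [oldSet, Finset.mem_filter, Finset.mem_univ, true_and, Finset.mem_map]
    constructor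
    · intro hx
      exact ⟨⟨(x : ℕ), hx⟩, by ext; simp [Fin.castAddEmb]⟩
    · rintro ⟨y, rfl⟩
      simpa [Fin.castAddEmb] using y.isLt
  rw [h, Finset.card_map, Finset.card_univ, Fintype.card_fin]

lemma extensions_eq (n m : ℕ) (πP : Finset (Finset (Fin (n + m)))) :
    extensions n m πP = PartsExt Finset.univ (oldSet n m) πP := by
  ext ρ
  simp only [extensions, PartsExt, Finset.mem_filter, Finset.mem_univ, true_and]

lemma gibbs_eq {α : Type*} (σ θ : ℝ) (N : ℕ) (ρ : Finset (Finset α)) :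
    gibbsW σ (EPV σ θ N) ρ = Wgt θ σ ρ / risingFac θ N := by
  unfold gibbsW EPV Wgt
  rw [div_mul_eq_mul_div]

lemma Scount_zero_iff {n m : ℕ} {πP : Finset (Finset (Fin (n + m)))}
    {Bi : Finset (Fin (n + m))} (hBi : Bi ∈ πP) {ρ : Finset (Finset (Fin (n + m)))}
    (hρ : IsPartOn Finset.univ ρ) (hres : restrictPart ρ (oldSet n m) = πP) :
    Scount n m Bi ρ = 0 ↔ Bi ∈ ρ := by
  have hBiR : Bi ∈ restrictPart ρ (oldSet n m) := hres ▸ hBi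
  rw [restrictPart, Finset.mem_erase, Finset.mem_image] at hBiR
  obtain ⟨hBne, D, hD, hDold⟩ := hBiR
  have hBsub : Bi ⊆ oldSet n m := by rw [← hDold]; exact Finset.inter_subset_right
  have hBiD : Bi ⊆ D := by rw [← hDold]; exact Finset.inter_subset_left
  obtain ⟨x, hx⟩ := Finset.nonempty_iff_ne_empty.mpr hBne
  constructor
  · intro h0
    unfold Scount at h0
    have hDf : D ∈ ρ.filter (fun C => Bi ⊆ C) := Finset.mem_filter.mpr ⟨hD, hBiD⟩
    have hc0 := Finset.sum_eq_zero_iff.mp h0 D hDf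
    have hDsub : D ⊆ oldSet n m := by
      rw [← Finset.sdiff_eq_empty_iff_subset]
      exact Finset.card_eq_zero.mp hc0
    have hDB : D = Bi := by rw [← hDold, Finset.inter_eq_left.mpr hDsub]
    exact hDB ▸ hD
  · intro hBiρ
    unfold Scount
    have hf : ρ.filter (fun C => Bi ⊆ C) = {Bi} := by
      ext C
      simp only [Finset.mem_filter, Finset.mem_singleton]
      constructor
      · rintro ⟨hC, hsub⟩
        exact hρ.blocks_eq hC hBiρ (hsub hx) hx
      · rintro rfl
        exact ⟨hBiρ, Finset.Subset.refl _⟩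
    rw [hf, Finset.sum_singleton, Finset.card_eq_zero, Finset.sdiff_eq_empty_iff_subset]
    exact hBsub

set_option maxHeartbeats 1000000

/-- Ewens–Pitman, expected number of re-observed old species,
given complete information. -/
theorem looking_backward_estimator_complete_EP
    (n m j : ℕ) (hn : 1 ≤ n) (hm : 1 ≤ m)
    (σ θ : ℝ) (hσ0 : 0 < σ) (hσ1 : σ < 1) (hθ : -σ < θ)
    (B : Fin j → Finset (Fin (n + m))) (hBinj : Function.Injective B)
    (hπ : IsPartOn (oldSet n m) (Finset.image B Finset.univ))
    (hVnj : 0 < EPV σ θ n j) :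
    condExpPi σ (EPV σ θ) n m (Finset.image B Finset.univ)
        (fun ρ => (RcntB n m j B ρ : ℝ)) =
      (j : ℝ) -
        (1 / risingFac (θ + n) m) *
          ∑ i ∈ Finset.Icc 1 n,
            ((Finset.univ.filter fun ℓ : Fin j => (B ℓ).card = i).card : ℝ) *
              risingFac (θ + (n : ℝ) - (i : ℝ) + σ) m := by
  have holdcard : (oldSet n m).card = n := oldSet_card n m
  have hπcard : (Finset.image B Finset.univ).card = j := by
    rw [Finset.card_image_of_injective _ hBinj, Finset.card_univ, Fintype.card_fin]
  have h0mem : (⟨0, by omega⟩ : Fin (n + m)) ∈ oldSet n m := by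
    simp only [oldSet, Finset.mem_filter, Finset.mem_univ, true_and]
    omega
  have hπne : (Finset.image B Finset.univ).Nonempty := by
    obtain ⟨D, ⟨hD, -⟩, -⟩ := hπ.2.2 _ h0mem
    exact ⟨D, hD⟩
  have hj1 : 1 ≤ j := by
    rw [← hπcard]
    exact Finset.card_pos.mpr hπne
  have hVval : 0 < (∏ i ∈ Finset.range j, (θ + (i : ℝ) * σ)) / risingFac θ n := hVnj
  have hprodj : (∏ i ∈ Finset.range j, (θ + (i : ℝ) * σ)) ≠ 0 := by
    intro h; rw [h, zero_div] at hVval; exact lt_irrefl 0 hVval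
  have hrfθn : risingFac θ n ≠ 0 := by
    intro h; rw [h, div_zero] at hVval; exact lt_irrefl 0 hVval
  have hθne : θ ≠ 0 := by
    intro h
    apply hprodj
    refine Finset.prod_eq_zero (Finset.mem_range.mpr hj1) ?_
    rw [h]; norm_num
  have h1σ : (0:ℝ) < 1 - σ := by linarith
  have hrf1pos : ∀ k : ℕ, 0 < risingFac (1 - σ) k := by
    intro k
    refine Finset.prod_pos fun i _ => ?_
    have : (0:ℝ) ≤ i := Nat.cast_nonneg i
    linarith
  have hrfBpos : (0:ℝ) < risingFac (θ + n) m := by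
    refine Finset.prod_pos fun i _ => ?_
    have h1 : (1:ℝ) ≤ (n:ℝ) := by exact_mod_cast hn
    have h2 : (0:ℝ) ≤ (i:ℝ) := Nat.cast_nonneg i
    linarith
  have hrfBne : risingFac (θ + n) m ≠ 0 := ne_of_gt hrfBpos
  have hRne : risingFac θ (n + m) ≠ 0 := by
    rw [risingFac_add θ n m]
    exact mul_ne_zero hrfθn hrfBne
  have hWπ : Wgt θ σ (Finset.image B Finset.univ) ≠ 0 := by
    unfold Wgt
    rw [hπcard]
    exact mul_ne_zero hprodj (ne_of_gt (Finset.prod_pos fun C _ => hrf1pos _))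
  have hunion : oldSet n m ∪ (Finset.univ \ oldSet n m) = Finset.univ :=
    Finset.union_sdiff_of_subset (Finset.subset_univ _)
  have hdisj : Disjoint (oldSet n m) (Finset.univ \ oldSet n m) := Finset.disjoint_sdiff
  have hnewcard : ((Finset.univ : Finset (Fin (n + m))) \ oldSet n m).card = m := by
    rw [Finset.card_sdiff_of_subset (Finset.subset_univ _), Finset.card_univ, Fintype.card_fin, holdcard]
    omega
  have hkeyD := key_sum θ σ (oldSet n m) (Finset.image B Finset.univ) hπ
    (Finset.univ \ oldSet n m) hdisj
  rw [hunion, hnewcard, holdcard] at hkeyD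
  -- per-block frozen sums
  have hNl : ∀ ℓ : Fin j,
      ∑ ρ ∈ (PartsExt Finset.univ (oldSet n m) (Finset.image B Finset.univ)).filter
          (fun ρ => B ℓ ∈ ρ), Wgt θ σ ρ
        = risingFac (θ + (n : ℝ) - ((B ℓ).card : ℝ) + σ) m
            * Wgt θ σ (Finset.image B Finset.univ) := by
    intro ℓ
    have hBiπ : B ℓ ∈ Finset.image B Finset.univ :=
      Finset.mem_image_of_mem B (Finset.mem_univ ℓ)
    have hBis : B ℓ ⊆ oldSet n m := hπ.1 _ hBiπ
    have hBine : (B ℓ).Nonempty := hπ.block_nonempty hBiπ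
    have hBcardn : (B ℓ).card ≤ n :=
      le_trans (Finset.card_le_card hBis) (le_of_eq holdcard)
    have hpart2 : IsPartOn (oldSet n m \ B ℓ) ((Finset.image B Finset.univ).erase (B ℓ)) :=
      isPartOn_erase hπ hBiπ
    have hsub2 : (oldSet n m \ B ℓ) ∪ (Finset.univ \ oldSet n m) = Finset.univ \ B ℓ := by
      ext x
      simp only [Finset.mem_union, Finset.mem_sdiff, Finset.mem_univ, true_and]
      constructor
      · rintro (⟨h1, h2⟩ | h1)
        · exact h2
        · exact fun h => h1 (hBis h)
      · intro h
        by_cases hxo : x ∈ oldSet n m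
        · exact Or.inl ⟨hxo, h⟩
        · exact Or.inr hxo
    have hdisj2 : Disjoint (oldSet n m \ B ℓ) (Finset.univ \ oldSet n m) := by
      rw [Finset.disjoint_left]
      intro x hx hx2
      exact (Finset.mem_sdiff.mp hx2).2 (Finset.mem_sdiff.mp hx).1
    have hkey2 := key_sum (θ + σ) σ (oldSet n m \ B ℓ)
      ((Finset.image B Finset.univ).erase (B ℓ)) hpart2 (Finset.univ \ oldSet n m) hdisj2
    rw [hsub2, hnewcard, Finset.card_sdiff_of_subset hBis, holdcard] at hkey2
    have hfz := frozen_sum Finset.univ (oldSet n m) (Finset.subset_univ _)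
      (Finset.image B Finset.univ) hπ (B ℓ) hBiπ (Wgt θ σ)
    rw [hfz]
    have hins : ∀ ρ₀ ∈ PartsExt (Finset.univ \ B ℓ) (oldSet n m \ B ℓ)
        ((Finset.image B Finset.univ).erase (B ℓ)),
        Wgt θ σ (insert (B ℓ) ρ₀)
          = θ * risingFac (1 - σ) ((B ℓ).card - 1) * Wgt (θ + σ) σ ρ₀ := by
      intro ρ₀ hρ₀
      exact Wgt_insert_top θ σ (notMem_frozen (mem_PartsExt.mp hρ₀).1 hBine)
    rw [Finset.sum_congr rfl hins, ← Finset.mul_sum, hkey2]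
    have hsplitW : Wgt θ σ (Finset.image B Finset.univ)
        = θ * risingFac (1 - σ) ((B ℓ).card - 1)
            * Wgt (θ + σ) σ ((Finset.image B Finset.univ).erase (B ℓ)) := by
      conv_lhs => rw [← Finset.insert_erase hBiπ]
      exact Wgt_insert_top θ σ (Finset.notMem_erase _ _)
    rw [hsplitW]
    have hx : θ + σ + ((n - (B ℓ).card : ℕ) : ℝ)
        = θ + (n : ℝ) - ((B ℓ).card : ℝ) + σ := by
      rw [Nat.cast_sub hBcardn]; ring
    rw [hx]
    ring
  -- counting identity
  have hcnt : ∀ ρ : Finset (Finset (Fin (n + m))), ((RcntB n m j B ρ : ℕ) : ℝ)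
      = ∑ ℓ : Fin j, (1 - if Scount n m (B ℓ) ρ = 0 then (1:ℝ) else 0) := by
    intro ρ
    unfold RcntB
    rw [Finset.card_filter, Nat.cast_sum]
    refine Finset.sum_congr rfl fun ℓ _ => ?_
    by_cases h : Scount n m (B ℓ) ρ = 0 <;> simp [h]
  -- the filtered indicator sums
  have hFl : ∀ ℓ : Fin j,
      ∑ ρ ∈ PartsExt Finset.univ (oldSet n m) (Finset.image B Finset.univ),
        (if Scount n m (B ℓ) ρ = 0 then (1:ℝ) else 0)
          * (Wgt θ σ ρ / risingFac θ (n + m))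
      = risingFac (θ + (n : ℝ) - ((B ℓ).card : ℝ) + σ) m
          * Wgt θ σ (Finset.image B Finset.univ) / risingFac θ (n + m) := by
    intro ℓ
    have hBiπ : B ℓ ∈ Finset.image B Finset.univ :=
      Finset.mem_image_of_mem B (Finset.mem_univ ℓ)
    have h1 : ∀ ρ ∈ PartsExt Finset.univ (oldSet n m) (Finset.image B Finset.univ),
        (if Scount n m (B ℓ) ρ = 0 then (1:ℝ) else 0)
            * (Wgt θ σ ρ / risingFac θ (n + m))
          = if B ℓ ∈ ρ then Wgt θ σ ρ / risingFac θ (n + m) else 0 := by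
      intro ρ hρ
      obtain ⟨hp, hr⟩ := mem_PartsExt.mp hρ
      simp only [Scount_zero_iff hBiπ hp hr, ite_mul, one_mul, zero_mul]
    rw [Finset.sum_congr rfl h1, ← Finset.sum_filter, ← Finset.sum_div, hNl ℓ]
  -- numerator
  have hNum : ∑ ρ ∈ PartsExt Finset.univ (oldSet n m) (Finset.image B Finset.univ),
      ((RcntB n m j B ρ : ℕ) : ℝ) * (Wgt θ σ ρ / risingFac θ (n + m))
      = ((j : ℝ) * risingFac (θ + n) m
          - ∑ ℓ : Fin j, risingFac (θ + (n : ℝ) - ((B ℓ).card : ℝ) + σ) m)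
          * (Wgt θ σ (Finset.image B Finset.univ) / risingFac θ (n + m)) := by
    have hstep1 : ∀ ρ ∈ PartsExt Finset.univ (oldSet n m) (Finset.image B Finset.univ),
        ((RcntB n m j B ρ : ℕ) : ℝ) * (Wgt θ σ ρ / risingFac θ (n + m))
        = ∑ ℓ : Fin j, (Wgt θ σ ρ / risingFac θ (n + m)
            - (if Scount n m (B ℓ) ρ = 0 then (1:ℝ) else 0)
              * (Wgt θ σ ρ / risingFac θ (n + m))) := by
      intro ρ _
      rw [hcnt ρ, Finset.sum_mul]
      refine Finset.sum_congr rfl fun ℓ _ => ?_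
      ring
    rw [Finset.sum_congr rfl hstep1, Finset.sum_comm]
    have hstep2 : ∀ ℓ : Fin j,
        ∑ ρ ∈ PartsExt Finset.univ (oldSet n m) (Finset.image B Finset.univ),
          (Wgt θ σ ρ / risingFac θ (n + m)
            - (if Scount n m (B ℓ) ρ = 0 then (1:ℝ) else 0)
              * (Wgt θ σ ρ / risingFac θ (n + m)))
        = risingFac (θ + n) m * Wgt θ σ (Finset.image B Finset.univ) / risingFac θ (n + m)
          - risingFac (θ + (n : ℝ) - ((B ℓ).card : ℝ) + σ) m
              * Wgt θ σ (Finset.image B Finset.univ) / risingFac θ (n + m) := by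
      intro ℓ
      rw [Finset.sum_sub_distrib, ← Finset.sum_div, hkeyD, hFl ℓ, mul_div_assoc,
        mul_div_assoc]
    rw [Finset.sum_congr rfl fun ℓ _ => hstep2 ℓ, Finset.sum_sub_distrib,
      Finset.sum_const, Finset.card_univ, Fintype.card_fin, nsmul_eq_mul]
    simp only [mul_div_assoc]
    rw [← Finset.sum_mul]
    ring
  -- denominator
  have hDen : ∑ ρ ∈ PartsExt Finset.univ (oldSet n m) (Finset.image B Finset.univ),
      gibbsW σ (EPV σ θ (n + m)) ρ
      = risingFac (θ + n) m
          * (Wgt θ σ (Finset.image B Finset.univ) / risingFac θ (n + m)) := by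
    rw [Finset.sum_congr rfl fun ρ _ => gibbs_eq σ θ (n + m) ρ, ← Finset.sum_div, hkeyD,
      mul_div_assoc]
  -- regrouping by block size
  have hgroup : ∑ ℓ : Fin j, risingFac (θ + (n : ℝ) - ((B ℓ).card : ℝ) + σ) m
      = ∑ i ∈ Finset.Icc 1 n,
          ((Finset.univ.filter fun ℓ : Fin j => (B ℓ).card = i).card : ℝ)
            * risingFac (θ + (n : ℝ) - (i : ℝ) + σ) m := by
    have hmapsB : ∀ ℓ ∈ (Finset.univ : Finset (Fin j)), (B ℓ).card ∈ Finset.Icc 1 n := by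
      intro ℓ _
      have hBiπ : B ℓ ∈ Finset.image B Finset.univ :=
        Finset.mem_image_of_mem B (Finset.mem_univ ℓ)
      exact Finset.mem_Icc.mpr ⟨Finset.card_pos.mpr (hπ.block_nonempty hBiπ),
        le_trans (Finset.card_le_card (hπ.1 _ hBiπ)) (le_of_eq holdcard)⟩
    rw [← Finset.sum_fiberwise_of_maps_to hmapsB
      (fun ℓ => risingFac (θ + (n : ℝ) - ((B ℓ).card : ℝ) + σ) m)]
    refine Finset.sum_congr rfl fun i _ => ?_
    rw [Finset.sum_congr rfl (fun ℓ hℓ => by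
      rw [(Finset.mem_filter.mp hℓ).2]), Finset.sum_const, nsmul_eq_mul]
  -- final assembly
  have hNum' : ∑ ρ ∈ PartsExt Finset.univ (oldSet n m) (Finset.image B Finset.univ),
      ((RcntB n m j B ρ : ℕ) : ℝ) * gibbsW σ (EPV σ θ (n + m)) ρ
      = ((j : ℝ) * risingFac (θ + n) m
          - ∑ ℓ : Fin j, risingFac (θ + (n : ℝ) - ((B ℓ).card : ℝ) + σ) m)
          * (Wgt θ σ (Finset.image B Finset.univ) / risingFac θ (n + m)) := by
    rw [← hNum]
    exact Finset.sum_congr rfl fun ρ _ => by rw [gibbs_eq σ θ (n + m) ρ]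
  simp only [condExpPi, extensions_eq n m]
  rw [hNum', hDen, ← hgroup]
  have hcne : Wgt θ σ (Finset.image B Finset.univ) / risingFac θ (n + m) ≠ 0 :=
    div_ne_zero hWπ hRne
  field_simp
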